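/- The set of pairs (c_L, c_R) of series over X = {x₀, x₁} with c_L non-proper forms a group under the composition product c_δ ∘ d_δ = ((c_L ∘̃ d_δ)⧢d_L, (c_L ∘̃ d_δ)⧢d_R + c_R ∘̃ d_δ), with identity (1,0). The inverse (c_L^{∘-1}, c_R^{∘-1}) is the unique fixed point of the contraction S_R(e_L,e_R) = ((c_L ∘̃ (e_L,e_R))^{⧢-1}, −e_L ⧢ (c_R ∘̃ (e_L,e_R))). -/

import Mathlib

/-- Formal power series over the alphabet `X = {x₀, x₁}` (encoded as `Bool`,
with `x₀ = false` and `x₁ = true`). -/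
abbrev FPS := List Bool → ℝ

/-- The letter `x₀`. -/
def x₀ : Bool := false

/-- The letter `x₁`. -/
def x₁ : Bool := true

/-- Shuffle product of formal power series, via the left-quotient recursion. -/
noncomputable def shuffle : (List Bool → ℝ) → (List Bool → ℝ) → List Bool → ℝ
  | c, d, [] => c [] * d []
  | c, d, x :: w => shuffle (fun u => c (x :: u)) d w + shuffle c (fun u => d (x :: u)) w

/-- The series `1` (the empty word). -/
noncomputable def oneF : FPS := fun w => match w with | [] => 1 | _ => 0

/-- The series corresponding to a single word. -/
noncomputable def ind (η : List Bool) : FPS := fun w => if w = η then 1 else 0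

/-- Left catenation of the series `e` by a letter `x`: the series `x e`. -/
noncomputable def pre (x : Bool) (e : FPS) : FPS :=
  fun w => match w with
  | [] => 0
  | y :: u => if y = x then e u else 0

/-- The word-indexed family of endomorphisms `φ_d`, determined by
`φ_d(x₀)(e) = x₀ e` and `φ_d(x₁)(e) = x₁(d_L ⧢ e) + x₀(d_R ⧢ e)`. -/
noncomputable def phiW (d : FPS × FPS) : List Bool → FPS → FPS
  | [], e => e
  | x :: η, e =>
      if x then pre x₁ (shuffle d.1 (phiW d η e)) + pre x₀ (shuffle d.2 (phiW d η e))
      else pre x₀ (phiW d η e)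

/-- The mixed composition product `c ∘̃ d_δ = Σ_η (c,η) φ_d(η)(1)`.
(For each word `w` only the finitely many `η` with `|η| ≤ |w|` contribute.) -/
noncomputable def mixedComp (c : FPS) (d : FPS × FPS) : FPS :=
  fun w => ∑' η : List Bool, c η * phiW d η oneF w

/-- The composition product on pairs:
`c_δ ∘ d_δ = ((c_L ∘̃ d_δ) ⧢ d_L, (c_L ∘̃ d_δ) ⧢ d_R + c_R ∘̃ d_δ)`. -/
noncomputable def compD (c d : FPS × FPS) : FPS × FPS :=
  (shuffle (mixedComp c.1 d) d.1,
    shuffle (mixedComp c.1 d) d.2 + mixedComp c.2 d)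

/-- Shuffle powers. -/
noncomputable def shufflePow (c : FPS) : ℕ → FPS
  | 0 => oneF
  | n + 1 => shuffle c (shufflePow c n)

/-- Shuffle inverse of a non-proper series:
`c^{⧢-1} = (c,∅)⁻¹ · (c')^{⧢*}` with `c' = 1 - c/(c,∅)`. -/
noncomputable def shuffleInv (c : FPS) : FPS :=
  fun w => (c [])⁻¹ * ∑' k : ℕ, shufflePow (oneF - (c [])⁻¹ • c) k w

/-- The map `S_R(e_L, e_R) = ((c_L ∘̃ e)^{⧢-1}, −e_L ⧢ (c_R ∘̃ e))` whose fixed point is the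
composition inverse of `c`. -/
noncomputable def SR (c e : FPS × FPS) : FPS × FPS :=
  (shuffleInv (mixedComp c.1 e), -(shuffle e.1 (mixedComp c.2 e)))

namespace Work

lemma shuffle_nil (a b : FPS) : shuffle a b [] = a [] * b [] := rfl
lemma shuffle_cons (a b : FPS) (x : Bool) (w : List Bool) :
    shuffle a b (x :: w) =
      shuffle (fun u => a (x :: u)) b w + shuffle a (fun u => b (x :: u)) w := rfl

lemma shuffle_zero_left (b : FPS) (w : List Bool) : shuffle (fun _ => (0:ℝ)) b w = 0 := by
  induction w generalizing b with
  | nil => simp [shuffle]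
  | cons x w ih => simp [shuffle_cons, ih]

lemma shuffle_zero_right (a : FPS) (w : List Bool) : shuffle a (fun _ => (0:ℝ)) w = 0 := by
  induction w generalizing a with
  | nil => simp [shuffle]
  | cons x w ih => simp [shuffle_cons, ih]

lemma shuffle_add_left (a a' b : FPS) (w : List Bool) :
    shuffle (fun u => a u + a' u) b w = shuffle a b w + shuffle a' b w := by
  induction w generalizing a a' b with
  | nil => simp [shuffle]; ring
  | cons x w ih => simp only [shuffle_cons, ih]; ring

lemma shuffle_add_right (a b b' : FPS) (w : List Bool) :
    shuffle a (fun u => b u + b' u) w = shuffle a b w + shuffle a b' w := by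
  induction w generalizing a b b' with
  | nil => simp [shuffle]; ring
  | cons x w ih => simp only [shuffle_cons, ih]; ring

lemma shuffle_smul_left (r : ℝ) (a b : FPS) (w : List Bool) :
    shuffle (fun u => r * a u) b w = r * shuffle a b w := by
  induction w generalizing a b with
  | nil => simp [shuffle]; ring
  | cons x w ih => simp only [shuffle_cons, ih]; ring

lemma shuffle_smul_right (r : ℝ) (a b : FPS) (w : List Bool) :
    shuffle a (fun u => r * b u) w = r * shuffle a b w := by
  induction w generalizing a b with
  | nil => simp [shuffle]; ring
  | cons x w ih => simp only [shuffle_cons, ih]; ring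

lemma shuffle_one_left (b : FPS) (w : List Bool) : shuffle oneF b w = b w := by
  induction w generalizing b with
  | nil => simp [shuffle, oneF]
  | cons x w ih =>
      have h0 : (fun u => oneF (x :: u)) = (fun _ => (0:ℝ)) := by
        funext u; simp [oneF]
      rw [shuffle_cons, h0, shuffle_zero_left, ih]; simp

lemma shuffle_one_right (a : FPS) (w : List Bool) : shuffle a oneF w = a w := by
  induction w generalizing a with
  | nil => simp [shuffle, oneF]
  | cons x w ih =>
      have h0 : (fun u => oneF (x :: u)) = (fun _ => (0:ℝ)) := by
        funext u; simp [oneF]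
      rw [shuffle_cons, h0, shuffle_zero_right, ih]; simp

lemma shuffle_comm (a b : FPS) (w : List Bool) : shuffle a b w = shuffle b a w := by
  induction w generalizing a b with
  | nil => simp [shuffle]; ring
  | cons x w ih => rw [shuffle_cons, shuffle_cons, ih, ih (a := a), add_comm]

lemma shuffle_assoc (a b c : FPS) (w : List Bool) :
    shuffle (shuffle a b) c w = shuffle a (shuffle b c) w := by
  induction w generalizing a b c with
  | nil => simp [shuffle]; ring
  | cons x w ih =>
      have hL : (fun u => shuffle a b (x :: u))
          = fun u => shuffle (fun v => a (x :: v)) b u + shuffle a (fun v => b (x :: v)) u := rfl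
      have hR : (fun u => shuffle b c (x :: u))
          = fun u => shuffle (fun v => b (x :: v)) c u + shuffle b (fun v => c (x :: v)) u := rfl
      rw [shuffle_cons, shuffle_cons, hL, hR, shuffle_add_left, shuffle_add_right, ih, ih, ih]
      ring

end Work

namespace Work

lemma shuffle_congr {a a' b b' : FPS} (w : List Bool)
    (ha : ∀ u : List Bool, u.length ≤ w.length → a u = a' u)
    (hb : ∀ u : List Bool, u.length ≤ w.length → b u = b' u) :
    shuffle a b w = shuffle a' b' w := by
  induction w generalizing a a' b b' with
  | nil => simp only [shuffle_nil, ha [] (by simp), hb [] (by simp)]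
  | cons x w ih =>
      rw [shuffle_cons, shuffle_cons,
        ih (fun u hu => ha (x :: u) (by simpa using Nat.succ_le_succ hu))
           (fun u hu => hb u (hu.trans (Nat.le_succ _))),
        ih (fun u hu => ha u (hu.trans (Nat.le_succ _)))
           (fun u hu => hb (x :: u) (by simpa using Nat.succ_le_succ hu))]

lemma shuffle_vanish_right {a b : FPS} (w : List Bool)
    (hb : ∀ u : List Bool, u.length ≤ w.length → b u = 0) :
    shuffle a b w = 0 := by
  have := shuffle_congr (a := a) (a' := a) (b := b) (b' := fun _ => 0) w
    (fun _ _ => rfl) hb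
  rw [this, shuffle_zero_right]

lemma shuffle_vanish_left {a b : FPS} (w : List Bool)
    (ha : ∀ u : List Bool, u.length ≤ w.length → a u = 0) :
    shuffle a b w = 0 := by
  rw [shuffle_comm]; exact shuffle_vanish_right w ha

/-- if `a` vanishes below length `p` and `b` below length `q`, the shuffle vanishes
below length `p+q`. -/
lemma shuffle_proper {a b : FPS} (p q : ℕ)
    (ha : ∀ u : List Bool, u.length < p → a u = 0)
    (hb : ∀ u : List Bool, u.length < q → b u = 0) :
    ∀ w : List Bool, w.length < p + q → shuffle a b w = 0 := by
  intro w
  induction w generalizing a b p q with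
  | nil =>
      intro hw
      simp only [List.length_nil] at hw
      rcases Nat.eq_zero_or_pos p with hp | hp
      · subst hp
        simp only [Nat.zero_add] at hw
        rw [shuffle_nil, hb [] (by simpa using hw), mul_zero]
      · rw [shuffle_nil, ha [] (by simpa using hp), zero_mul]
  | cons x w ih =>
      intro hw
      rcases Nat.eq_zero_or_pos p with hp | hp
      · subst hp
        simp only [Nat.zero_add] at hw
        exact shuffle_vanish_right _ (fun u hu => hb u (lt_of_le_of_lt hu hw))
      rcases Nat.eq_zero_or_pos q with hq | hq
      · subst hq
        simp only [Nat.add_zero] at hw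
        exact shuffle_vanish_left _ (fun u hu => ha u (lt_of_le_of_lt hu hw))
      rw [shuffle_cons]
      have h1 : shuffle (fun u => a (x :: u)) b w = 0 := by
        refine ih (p - 1) q (fun u hu => ha (x :: u) ?_) hb ?_
        · simp only [List.length_cons]; omega
        · simp only [List.length_cons] at hw; omega
      have h2 : shuffle a (fun u => b (x :: u)) w = 0 := by
        refine ih p (q - 1) ha (fun u hu => hb (x :: u) ?_) ?_
        · simp only [List.length_cons]; omega
        · simp only [List.length_cons] at hw; omega
      rw [h1, h2, add_zero]

lemma shufflePow_vanish {g : FPS} (hg : g [] = 0) :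
    ∀ (k : ℕ) (w : List Bool), w.length < k → shufflePow g k w = 0 := by
  intro k
  induction k with
  | zero => intro w hw; omega
  | succ k ih =>
      intro w hw
      have hgp : ∀ u : List Bool, u.length < 1 → g u = 0 := by
        intro u hu
        have : u = [] := by cases u with | nil => rfl | cons y v => simp at hu
        rw [this, hg]
      exact shuffle_proper 1 k hgp (fun u hu => ih u hu) w (by omega)

lemma shufflePow_congr {g g' : FPS} (n : ℕ)
    (h : ∀ u : List Bool, u.length ≤ n → g u = g' u) :
    ∀ (k : ℕ) (w : List Bool), w.length ≤ n → shufflePow g k w = shufflePow g' k w := by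
  intro k
  induction k with
  | zero => intro w _; rfl
  | succ k ih =>
      intro w hw
      exact shuffle_congr w (fun u hu => h u (hu.trans hw)) (fun u hu => ih u (hu.trans hw))

end Work

namespace Work

/-- Finset of words of length at most `n`. -/
noncomputable def Sfin (n : ℕ) : Finset (List Bool) := (List.finite_length_le Bool n).toFinset

lemma mem_Sfin {n : ℕ} {η : List Bool} : η ∈ Sfin n ↔ η.length ≤ n := by
  simp [Sfin, Set.Finite.mem_toFinset]

lemma phiW_nil_word (d : FPS × FPS) (η : List Bool) (e : FPS) (h : η ≠ []) :
    phiW d η e [] = 0 := by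
  cases η with
  | nil => exact absurd rfl h
  | cons x η =>
      cases x <;> simp [phiW, pre, Pi.add_apply]

lemma phiW_vanish (d : FPS × FPS) (e : FPS) :
    ∀ (η : List Bool) (w : List Bool), w.length < η.length → phiW d η e w = 0 := by
  intro η
  induction η with
  | nil => intro w hw; simp at hw
  | cons x η ih =>
      intro w hw
      cases w with
      | nil => exact phiW_nil_word d _ e (by simp)
      | cons y u =>
          simp only [List.length_cons] at hw
          have hu : u.length < η.length := by omega
          have hv : ∀ v : List Bool, v.length ≤ u.length → phiW d η e v = 0 :=
            fun v hvu => ih v (lt_of_le_of_lt hvu hu)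
          cases x <;> cases y <;>
            simp [phiW, pre, Pi.add_apply, ih u hu,
              shuffle_vanish_right (a := d.1) u hv, shuffle_vanish_right (a := d.2) u hv]

lemma phiW_false_cons (d : FPS × FPS) (η : List Bool) (e : FPS) (y : Bool) (u : List Bool) :
    phiW d (false :: η) e (y :: u) = if y = false then phiW d η e u else 0 := by
  cases y <;> simp [phiW, pre, x₀]

lemma phiW_true_cons (d : FPS × FPS) (η : List Bool) (e : FPS) (y : Bool) (u : List Bool) :
    phiW d (true :: η) e (y :: u) =
      if y = true then shuffle d.1 (phiW d η e) u else shuffle d.2 (phiW d η e) u := by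
  cases y <;> simp [phiW, pre, x₀, x₁, Pi.add_apply]

lemma mixedComp_eq_sum (c : FPS) (d : FPS × FPS) (w : List Bool) :
    mixedComp c d w = ∑ η ∈ Sfin w.length, c η * phiW d η oneF w := by
  refine tsum_eq_sum (s := Sfin w.length) ?_
  intro η hη
  rw [phiW_vanish d oneF η w
    (lt_of_not_ge (fun h : η.length ≤ w.length => hη (mem_Sfin.mpr h))), mul_zero]

lemma summable_mixed (c : FPS) (d : FPS × FPS) (w : List Bool) :
    Summable (fun η => c η * phiW d η oneF w) := by
  refine summable_of_ne_finset_zero (s := Sfin w.length) ?_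
  intro η hη
  rw [phiW_vanish d oneF η w (lt_of_not_ge (fun h => hη (mem_Sfin.mpr h))), mul_zero]

lemma shuffle_finset_sum_right {ι : Type*} (a : FPS) (s : Finset ι) (b : ι → FPS)
    (w : List Bool) :
    shuffle a (fun u => ∑ i ∈ s, b i u) w = ∑ i ∈ s, shuffle a (b i) w := by
  classical
  induction s using Finset.induction with
  | empty => simpa using shuffle_zero_right a w
  | insert _ _ hni ih =>
      rename_i j s
      rw [Finset.sum_insert hni]
      have : (fun u => ∑ i ∈ insert j s, b i u)
          = fun u => b j u + ∑ i ∈ s, b i u := by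
        funext u; rw [Finset.sum_insert hni]
      rw [this, shuffle_add_right, ih]

end Work

namespace Work

lemma mixedComp_eq_sum_of_le (c : FPS) (d : FPS × FPS) {w : List Bool} {n : ℕ}
    (h : w.length ≤ n) :
    mixedComp c d w = ∑ η ∈ Sfin n, c η * phiW d η oneF w := by
  rw [mixedComp_eq_sum]
  refine Finset.sum_subset (fun η hη => mem_Sfin.mpr ((mem_Sfin.mp hη).trans h)) ?_
  intro η _ hη
  rw [phiW_vanish d oneF η w (lt_of_not_ge (fun hl => hη (mem_Sfin.mpr hl))), mul_zero]

lemma sum_cons_split (F : List Bool → ℝ) (n : ℕ) (hnil : F [] = 0) :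
    ∑ η ∈ Sfin (n+1), F η
      = (∑ η ∈ Sfin n, F (false :: η)) + ∑ η ∈ Sfin n, F (true :: η) := by
  classical
  have hsub : (Sfin n).image (List.cons false) ∪ (Sfin n).image (List.cons true)
      ⊆ Sfin (n+1) := by
    intro η hη
    rcases Finset.mem_union.mp hη with h | h <;>
    · obtain ⟨η', hη', rfl⟩ := Finset.mem_image.mp h
      exact mem_Sfin.mpr (by simpa using Nat.succ_le_succ (mem_Sfin.mp hη'))
  have hvanish : ∀ η ∈ Sfin (n+1),
      η ∉ (Sfin n).image (List.cons false) ∪ (Sfin n).image (List.cons true) → F η = 0 := by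
    intro η hη hnot
    cases η with
    | nil => exact hnil
    | cons x η' =>
        exfalso
        have hη' : η' ∈ Sfin n := mem_Sfin.mpr (by
          have := mem_Sfin.mp hη; simpa using Nat.le_of_succ_le_succ (by simpa using this))
        cases x
        · exact hnot (Finset.mem_union_left _ (Finset.mem_image_of_mem _ hη'))
        · exact hnot (Finset.mem_union_right _ (Finset.mem_image_of_mem _ hη'))
  rw [← Finset.sum_subset hsub hvanish]
  have hdisj : Disjoint ((Sfin n).image (List.cons false)) ((Sfin n).image (List.cons true)) := by
    rw [Finset.disjoint_left]
    rintro η h1 h2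
    obtain ⟨a, _, rfl⟩ := Finset.mem_image.mp h1
    obtain ⟨b, _, hb⟩ := Finset.mem_image.mp h2
    exact absurd hb (by simp)
  rw [Finset.sum_union hdisj,
    Finset.sum_image (fun _ _ _ _ h => (List.cons.injEq .. ▸ h).2),
    Finset.sum_image (fun _ _ _ _ h => (List.cons.injEq .. ▸ h).2)]

lemma mixedComp_true (c : FPS) (d : FPS × FPS) (w : List Bool) :
    mixedComp c d (true :: w) = shuffle d.1 (mixedComp (fun u => c (true :: u)) d) w := by
  set n := w.length with hn
  rw [mixedComp_eq_sum]
  simp only [List.length_cons]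
  rw [sum_cons_split _ n (by simp [phiW, oneF])]
  have h1 : ∀ η ∈ Sfin n, c (false :: η) * phiW d (false :: η) oneF (true :: w) = 0 := by
    intro η _; rw [phiW_false_cons]; simp
  rw [Finset.sum_congr rfl h1, Finset.sum_const_zero, zero_add]
  have h2 : ∀ η ∈ Sfin n, c (true :: η) * phiW d (true :: η) oneF (true :: w)
      = c (true :: η) * shuffle d.1 (phiW d η oneF) w := by
    intro η _; rw [phiW_true_cons]; simp
  rw [Finset.sum_congr rfl h2]
  have hcong : shuffle d.1 (mixedComp (fun u => c (true :: u)) d) w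
      = shuffle d.1 (fun u => ∑ η ∈ Sfin n, c (true :: η) * phiW d η oneF u) w := by
    refine shuffle_congr w (fun _ _ => rfl) ?_
    intro u hu
    exact mixedComp_eq_sum_of_le _ d (by omega)
  rw [hcong, shuffle_finset_sum_right]
  refine Finset.sum_congr rfl (fun η _ => ?_)
  rw [← shuffle_smul_right]

lemma mixedComp_false (c : FPS) (d : FPS × FPS) (w : List Bool) :
    mixedComp c d (false :: w) = mixedComp (fun u => c (false :: u)) d w
      + shuffle d.2 (mixedComp (fun u => c (true :: u)) d) w := by
  set n := w.length with hn
  rw [mixedComp_eq_sum]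
  simp only [List.length_cons]
  rw [sum_cons_split _ n (by simp [phiW, oneF])]
  have h1 : ∀ η ∈ Sfin n, c (false :: η) * phiW d (false :: η) oneF (false :: w)
      = c (false :: η) * phiW d η oneF w := by
    intro η _; rw [phiW_false_cons]; simp
  have h2 : ∀ η ∈ Sfin n, c (true :: η) * phiW d (true :: η) oneF (false :: w)
      = c (true :: η) * shuffle d.2 (phiW d η oneF) w := by
    intro η _; rw [phiW_true_cons]; simp
  rw [Finset.sum_congr rfl h1, Finset.sum_congr rfl h2]
  congr 1
  · exact (mixedComp_eq_sum_of_le _ d (le_refl _)).symm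
  · have hcong : shuffle d.2 (mixedComp (fun u => c (true :: u)) d) w
        = shuffle d.2 (fun u => ∑ η ∈ Sfin n, c (true :: η) * phiW d η oneF u) w := by
      refine shuffle_congr w (fun _ _ => rfl) ?_
      intro u hu
      exact mixedComp_eq_sum_of_le _ d hu
    rw [hcong, shuffle_finset_sum_right]
    refine Finset.sum_congr rfl (fun η _ => ?_)
    rw [← shuffle_smul_right]

lemma mixedComp_nil (c : FPS) (d : FPS × FPS) : mixedComp c d [] = c [] := by
  rw [mixedComp_eq_sum]
  have : Sfin 0 = { ([] : List Bool) } := by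
    ext η; simp [mem_Sfin, List.length_eq_zero_iff]
  rw [List.length_nil, this, Finset.sum_singleton]
  simp [phiW, oneF]

end Work

namespace Work

lemma mixedComp_zero (d : FPS × FPS) (w : List Bool) :
    mixedComp (fun _ => (0:ℝ)) d w = 0 := by
  rw [mixedComp_eq_sum]
  simp

lemma mixedComp_add (f g : FPS) (d : FPS × FPS) (w : List Bool) :
    mixedComp (fun u => f u + g u) d w = mixedComp f d w + mixedComp g d w := by
  rw [mixedComp_eq_sum, mixedComp_eq_sum, mixedComp_eq_sum, ← Finset.sum_add_distrib]
  refine Finset.sum_congr rfl (fun η _ => by ring)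

lemma mixedComp_smul (r : ℝ) (f : FPS) (d : FPS × FPS) (w : List Bool) :
    mixedComp (fun u => r * f u) d w = r * mixedComp f d w := by
  rw [mixedComp_eq_sum, mixedComp_eq_sum, Finset.mul_sum]
  refine Finset.sum_congr rfl (fun η _ => by ring)

lemma mixedComp_one (d : FPS × FPS) (w : List Bool) : mixedComp oneF d w = oneF w := by
  induction w with
  | nil => rw [mixedComp_nil]
  | cons x w ih =>
      have h1 : (fun u => oneF (true :: u)) = fun _ => (0:ℝ) := by funext u; simp [oneF]
      have h0 : (fun u => oneF (false :: u)) = fun _ => (0:ℝ) := by funext u; simp [oneF]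
      cases x
      · rw [mixedComp_false, h0, h1]
        have : shuffle d.2 (mixedComp (fun _ => (0:ℝ)) d) w = 0 :=
          shuffle_vanish_right w (fun u _ => mixedComp_zero d u)
        rw [mixedComp_zero, this]; simp [oneF]
      · rw [mixedComp_true, h1]
        have : shuffle d.1 (mixedComp (fun _ => (0:ℝ)) d) w = 0 :=
          shuffle_vanish_right w (fun u _ => mixedComp_zero d u)
        rw [this]; simp [oneF]

lemma mixedComp_ident (c : FPS) (w : List Bool) :
    mixedComp c (oneF, (0:FPS)) w = c w := by
  induction w generalizing c with
  | nil => rw [mixedComp_nil]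
  | cons x w ih =>
      cases x
      · rw [mixedComp_false]
        have hz : shuffle (oneF, (0:FPS)).2 (mixedComp (fun u => c (true :: u)) (oneF, (0:FPS))) w
            = 0 := shuffle_vanish_left w (fun u _ => rfl)
        rw [hz, ih, add_zero]
      · rw [mixedComp_true]
        have h1 : shuffle (oneF, (0:FPS)).1 (mixedComp (fun u => c (true :: u)) (oneF, (0:FPS))) w
            = mixedComp (fun u => c (true :: u)) (oneF, (0:FPS)) w := shuffle_one_left _ w
        rw [h1, ih]

lemma phiW_congr {d d' : FPS × FPS} (e : FPS) :
    ∀ (η w : List Bool),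
      (∀ u : List Bool, u.length < w.length → d.1 u = d'.1 u ∧ d.2 u = d'.2 u) →
      phiW d η e w = phiW d' η e w := by
  intro η
  induction η with
  | nil => intro w _; rfl
  | cons x η ih =>
      intro w hd
      cases w with
      | nil => rw [phiW_nil_word _ _ _ (by simp), phiW_nil_word _ _ _ (by simp)]
      | cons y u =>
          have hlen : u.length < (y :: u).length := by simp
          have hphi : ∀ v : List Bool, v.length ≤ u.length → phiW d η e v = phiW d' η e v := by
            intro v hv
            exact ih v (fun u' hu' => hd u' (by simp only [List.length_cons]; omega))
          cases x
          · rw [phiW_false_cons, phiW_false_cons]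
            by_cases hy : y = false
            · simp only [hy, if_true]
              exact ih u (fun u' hu' => hd u' (by simp only [List.length_cons]; omega))
            · simp [hy]
          · rw [phiW_true_cons, phiW_true_cons]
            have e1 : shuffle d.1 (phiW d η e) u = shuffle d'.1 (phiW d' η e) u :=
              shuffle_congr u (fun v hv => (hd v (by simp only [List.length_cons]; omega)).1) hphi
            have e2 : shuffle d.2 (phiW d η e) u = shuffle d'.2 (phiW d' η e) u :=
              shuffle_congr u (fun v hv => (hd v (by simp only [List.length_cons]; omega)).2) hphi
            rw [e1, e2]

lemma mixedComp_congr_d {d d' : FPS × FPS} (c : FPS) (w : List Bool)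
    (hd : ∀ u : List Bool, u.length < w.length → d.1 u = d'.1 u ∧ d.2 u = d'.2 u) :
    mixedComp c d w = mixedComp c d' w := by
  rw [mixedComp_eq_sum, mixedComp_eq_sum]
  exact Finset.sum_congr rfl (fun η _ => by rw [phiW_congr oneF η w hd])

end Work

namespace Work

lemma gser_nil {f : FPS} (hf : f [] ≠ 0) : (oneF - (f [])⁻¹ • f) [] = 0 := by
  simp only [Pi.sub_apply, Pi.smul_apply, smul_eq_mul, oneF]
  field_simp
  norm_num

lemma shuffleInv_nil {f : FPS} (hf : f [] ≠ 0) : shuffleInv f [] = (f [])⁻¹ := by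
  unfold shuffleInv
  have h : ∑' k : ℕ, shufflePow (oneF - (f [])⁻¹ • f) k [] = 1 := by
    rw [tsum_eq_sum (s := {0}) ?_]
    · simp [shufflePow, oneF]
    · intro k hk
      exact shufflePow_vanish (gser_nil hf) k [] (by simpa using Nat.pos_of_ne_zero (by simpa using hk))
  rw [h, mul_one]

lemma shuffleInv_ne_zero {f : FPS} (hf : f [] ≠ 0) : shuffleInv f [] ≠ 0 := by
  rw [shuffleInv_nil hf]; exact inv_ne_zero hf

lemma shuffleInv_congr {f f' : FPS} (w : List Bool)
    (h : ∀ u : List Bool, u.length ≤ w.length → f u = f' u) :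
    shuffleInv f w = shuffleInv f' w := by
  unfold shuffleInv
  have h0 : f [] = f' [] := h [] (by simp)
  rw [h0]
  congr 1
  refine tsum_congr (fun k => ?_)
  refine shufflePow_congr (g := oneF - (f' [])⁻¹ • f) (g' := oneF - (f' [])⁻¹ • f') w.length
    ?_ k w (le_refl _)
  intro u hu
  simp only [Pi.sub_apply, Pi.smul_apply, smul_eq_mul, h u hu]

lemma shuffle_shuffleInv {f : FPS} (hf : f [] ≠ 0) (w : List Bool) :
    shuffle f (shuffleInv f) w = oneF w := by
  classical
  set r := f [] with hr
  set g : FPS := oneF - r⁻¹ • f with hg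
  have hg0 : g [] = 0 := gser_nil hf
  set N := w.length with hN
  have hS : ∀ u : List Bool, u.length ≤ N →
      shuffleInv f u = (∑ k ∈ Finset.range (N+1), r⁻¹ * shufflePow g k u) := by
    intro u hu
    unfold shuffleInv
    rw [← Finset.mul_sum, ← hr, ← hg]
    congr 1
    refine tsum_eq_sum ?_
    intro k hk
    refine shufflePow_vanish hg0 k u ?_
    simp only [Finset.mem_range, not_lt] at hk
    omega
  have step1 : shuffle f (shuffleInv f) w
      = shuffle f (fun u => ∑ k ∈ Finset.range (N+1), r⁻¹ * shufflePow g k u) w :=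
    shuffle_congr w (fun _ _ => rfl) hS
  rw [step1, shuffle_finset_sum_right]
  have hfe : ∀ u, f u = r * (oneF u + (-1) * g u) := by
    intro u
    simp only [hg, Pi.sub_apply, Pi.smul_apply, smul_eq_mul]
    field_simp
    ring
  have step2 : ∀ k, shuffle f (fun u => r⁻¹ * shufflePow g k u) w
      = shufflePow g k w - shufflePow g (k+1) w := by
    intro k
    rw [shuffle_smul_right]
    have : shuffle f (shufflePow g k) w
        = r * (shufflePow g k w + (-1) * shufflePow g (k+1) w) := by
      have hfe' : shuffle f (shufflePow g k) w
          = shuffle (fun u => r * (oneF u + (-1) * g u)) (shufflePow g k) w := by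
        refine shuffle_congr w (fun u _ => hfe u) (fun _ _ => rfl)
      rw [hfe', shuffle_smul_left]
      congr 1
      rw [shuffle_add_left, shuffle_smul_left, shuffle_one_left]
      rfl
    rw [this]
    field_simp
    ring
  rw [Finset.sum_congr rfl (fun k _ => step2 k), Finset.sum_range_sub']
  have : shufflePow g (N+1) w = 0 := shufflePow_vanish hg0 (N+1) w (by omega)
  rw [this]
  simp [shufflePow]

end Work

namespace Work

lemma shuffle_left_comm (a b c : FPS) (w : List Bool) :
    shuffle a (shuffle b c) w = shuffle b (shuffle a c) w := by
  rw [← shuffle_assoc]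
  have : shuffle a b = shuffle b a := funext (fun u => shuffle_comm a b u)
  rw [this, shuffle_assoc]

lemma shuffle_zero_right' (a : FPS) (w : List Bool) : shuffle a (0 : FPS) w = 0 :=
  shuffle_vanish_right w (fun _ _ => rfl)

lemma compD_id_right (c : FPS × FPS) : compD c (oneF, (0:FPS)) = c := by
  unfold compD
  have hm1 : mixedComp c.1 (oneF, (0:FPS)) = c.1 := funext (fun w => mixedComp_ident c.1 w)
  have hm2 : mixedComp c.2 (oneF, (0:FPS)) = c.2 := funext (fun w => mixedComp_ident c.2 w)
  refine Prod.ext ?_ ?_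
  · show shuffle (mixedComp c.1 (oneF, (0:FPS))) oneF = c.1
    rw [hm1]; exact funext (fun w => shuffle_one_right c.1 w)
  · show shuffle (mixedComp c.1 (oneF, (0:FPS))) (0:FPS) + mixedComp c.2 (oneF, (0:FPS)) = c.2
    rw [hm1, hm2]
    funext w
    simp [Pi.add_apply, shuffle_zero_right' c.1 w]

lemma compD_id_left (d : FPS × FPS) : compD (oneF, (0:FPS)) d = d := by
  unfold compD
  have hm1 : mixedComp (oneF, (0:FPS)).1 d = oneF := funext (fun w => mixedComp_one d w)
  have hm2 : mixedComp (oneF, (0:FPS)).2 d = (0:FPS) := funext (fun w => mixedComp_zero d w)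
  refine Prod.ext ?_ ?_
  · show shuffle (mixedComp (oneF, (0:FPS)).1 d) d.1 = d.1
    rw [hm1]; exact funext (fun w => shuffle_one_left d.1 w)
  · show shuffle (mixedComp (oneF, (0:FPS)).1 d) d.2 + mixedComp (oneF, (0:FPS)).2 d = d.2
    rw [hm1, hm2]
    funext w
    simp [Pi.add_apply, shuffle_one_left d.2 w]

lemma fixed_ne_zero {c e : FPS × FPS} (hc : c.1 [] ≠ 0) (he : SR c e = e) : e.1 [] ≠ 0 := by
  have h1 : e.1 = shuffleInv (mixedComp c.1 e) := (congrArg Prod.fst he).symm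
  rw [h1]
  exact shuffleInv_ne_zero (by rw [mixedComp_nil]; exact hc)

lemma fixed_right_inv {c e : FPS × FPS} (hc : c.1 [] ≠ 0) (he : SR c e = e) :
    compD c e = (oneF, (0:FPS)) := by
  have h1 : e.1 = shuffleInv (mixedComp c.1 e) := (congrArg Prod.fst he).symm
  have h2 : e.2 = -(shuffle e.1 (mixedComp c.2 e)) := (congrArg Prod.snd he).symm
  have hf : mixedComp c.1 e [] ≠ 0 := by rw [mixedComp_nil]; exact hc
  have hone : shuffle (mixedComp c.1 e) e.1 = oneF := by
    funext w
    rw [h1]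
    exact shuffle_shuffleInv hf w
  refine Prod.ext hone ?_
  show shuffle (mixedComp c.1 e) e.2 + mixedComp c.2 e = (0:FPS)
  funext w
  have he2 : e.2 = fun u => (-1 : ℝ) * shuffle e.1 (mixedComp c.2 e) u := by
    rw [h2]; funext u; simp [Pi.neg_apply]
  rw [Pi.add_apply, he2, shuffle_smul_right, ← shuffle_assoc, hone, shuffle_one_left]
  simp

end Work

namespace Work

lemma mixedComp_shuffle (d : FPS × FPS) :
    ∀ (n : ℕ) (w : List Bool), w.length ≤ n → ∀ f g : FPS,
      mixedComp (shuffle f g) d w = shuffle (mixedComp f d) (mixedComp g d) w := by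
  intro n
  induction n with
  | zero =>
      intro w hw f g
      have : w = [] := List.length_eq_zero_iff.mp (Nat.le_zero.mp hw)
      subst this
      simp only [mixedComp_nil, shuffle_nil]
  | succ n ih =>
      intro w hw f g
      cases w with
      | nil =>
          simp only [mixedComp_nil, shuffle_nil]
      | cons x w =>
          have hw' : w.length ≤ n := by simpa using hw
          -- notation
          set f1 : FPS := fun v => f (true :: v) with hf1
          set g1 : FPS := fun v => g (true :: v) with hg1
          set f0 : FPS := fun v => f (false :: v) with hf0
          set g0 : FPS := fun v => g (false :: v) with hg0
          have congrIH : ∀ (a : FPS) (p q : FPS),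
              shuffle a (mixedComp (shuffle p q) d) w
                = shuffle a (shuffle (mixedComp p d) (mixedComp q d)) w := by
            intro a p q
            exact shuffle_congr w (fun _ _ => rfl)
              (fun u hu => ih u (le_trans hu hw') p q)
          cases x
          · -- x = false
            rw [mixedComp_false]
            have e1 : (fun u => shuffle f g (false :: u))
                = fun u => shuffle f0 g u + shuffle f g0 u := by
              funext u; exact shuffle_cons f g false u
            have e2 : (fun u => shuffle f g (true :: u))
                = fun u => shuffle f1 g u + shuffle f g1 u := by
              funext u; exact shuffle_cons f g true u
            rw [e1, e2]
            have e3 : mixedComp (fun u => shuffle f0 g u + shuffle f g0 u) d w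
                = mixedComp (shuffle f0 g) d w + mixedComp (shuffle f g0) d w :=
              mixedComp_add _ _ d w
            have e4 : mixedComp (fun u => shuffle f1 g u + shuffle f g1 u) d
                = fun u => mixedComp (shuffle f1 g) d u + mixedComp (shuffle f g1) d u :=
              funext (fun u => mixedComp_add _ _ d u)
            rw [e3, e4, shuffle_add_right]
            rw [ih w hw' f0 g, ih w hw' f g0, congrIH d.2 f1 g, congrIH d.2 f g1]
            -- now the RHS
            rw [shuffle_cons]
            have q1 : (fun u => mixedComp f d (false :: u))
                = fun u => mixedComp f0 d u + shuffle d.2 (mixedComp f1 d) u := by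
              funext u; exact mixedComp_false f d u
            have q2 : (fun u => mixedComp g d (false :: u))
                = fun u => mixedComp g0 d u + shuffle d.2 (mixedComp g1 d) u := by
              funext u; exact mixedComp_false g d u
            rw [q1, q2, shuffle_add_left, shuffle_add_right]
            rw [shuffle_assoc d.2 (mixedComp f1 d) (mixedComp g d) w]
            rw [shuffle_left_comm (mixedComp f d) d.2 (mixedComp g1 d) w]
            ring
          · -- x = true
            rw [mixedComp_true]
            have e2 : (fun u => shuffle f g (true :: u))
                = fun u => shuffle f1 g u + shuffle f g1 u := by
              funext u; exact shuffle_cons f g true u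
            rw [e2]
            have e4 : mixedComp (fun u => shuffle f1 g u + shuffle f g1 u) d
                = fun u => mixedComp (shuffle f1 g) d u + mixedComp (shuffle f g1) d u :=
              funext (fun u => mixedComp_add _ _ d u)
            rw [e4, shuffle_add_right, congrIH d.1 f1 g, congrIH d.1 f g1]
            rw [shuffle_cons]
            have q1 : (fun u => mixedComp f d (true :: u))
                = fun u => shuffle d.1 (mixedComp f1 d) u := by
              funext u; exact mixedComp_true f d u
            have q2 : (fun u => mixedComp g d (true :: u))
                = fun u => shuffle d.1 (mixedComp g1 d) u := by
              funext u; exact mixedComp_true g d u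
            rw [q1, q2]
            rw [shuffle_assoc d.1 (mixedComp f1 d) (mixedComp g d) w]
            rw [shuffle_left_comm (mixedComp f d) d.1 (mixedComp g1 d) w]

end Work

namespace Work

lemma mixedComp_comp (b c : FPS × FPS) :
    ∀ (n : ℕ) (w : List Bool), w.length ≤ n → ∀ f : FPS,
      mixedComp (mixedComp f b) c w = mixedComp f (compD b c) w := by
  intro n
  induction n with
  | zero =>
      intro w hw f
      have : w = [] := List.length_eq_zero_iff.mp (Nat.le_zero.mp hw)
      subst this
      simp only [mixedComp_nil]
  | succ n ih =>
      intro w hw f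
      cases w with
      | nil => simp only [mixedComp_nil]
      | cons x w =>
          have hw' : w.length ≤ n := by simpa using hw
          set f1 : FPS := fun v => f (true :: v) with hf1
          set f0 : FPS := fun v => f (false :: v) with hf0
          set X : FPS := mixedComp f1 (compD b c) with hX
          have key : ∀ a : FPS,
              shuffle a (mixedComp (fun u => mixedComp f b (true :: u)) c) w
                = shuffle a (shuffle (mixedComp b.1 c) X) w := by
            intro a
            have q : (fun u => mixedComp f b (true :: u))
                = fun u => shuffle b.1 (mixedComp f1 b) u := by
              funext u; exact mixedComp_true f b u
            rw [q]
            have s1 : shuffle a (mixedComp (fun u => shuffle b.1 (mixedComp f1 b) u) c) w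
                = shuffle a (shuffle (mixedComp b.1 c) (mixedComp (mixedComp f1 b) c)) w :=
              shuffle_congr w (fun _ _ => rfl)
                (fun u hu => mixedComp_shuffle c u.length u (le_refl _) _ _)
            rw [s1]
            refine shuffle_congr w (fun _ _ => rfl) ?_
            intro u hu
            refine shuffle_congr u (fun _ _ => rfl) ?_
            intro v hv
            exact ih v (by omega) f1
          cases x
          · -- false
            rw [mixedComp_false, mixedComp_false]
            have q0 : (fun u => mixedComp f b (false :: u))
                = fun u => mixedComp f0 b u + shuffle b.2 (mixedComp f1 b) u := by
              funext u; exact mixedComp_false f b u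
            rw [q0, mixedComp_add, ih w hw' f0, key c.2]
            have s2 : mixedComp (fun u => shuffle b.2 (mixedComp f1 b) u) c w
                = shuffle (mixedComp b.2 c) (mixedComp (mixedComp f1 b) c) w :=
              mixedComp_shuffle c w.length w (le_refl _) _ _
            rw [s2]
            have s3 : shuffle (mixedComp b.2 c) (mixedComp (mixedComp f1 b) c) w
                = shuffle (mixedComp b.2 c) X w := by
              refine shuffle_congr w (fun _ _ => rfl) ?_
              intro u hu
              exact ih u (by omega) f1
            rw [s3]
            have hsnd : (compD b c).2
                = fun u => shuffle (mixedComp b.1 c) c.2 u + mixedComp b.2 c u := rfl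
            rw [hsnd, shuffle_add_left]
            rw [shuffle_assoc (mixedComp b.1 c) c.2 X w]
            rw [shuffle_left_comm c.2 (mixedComp b.1 c) X w]
            ring
          · -- true
            rw [mixedComp_true, mixedComp_true, key c.1]
            have hfst : (compD b c).1 = shuffle (mixedComp b.1 c) c.1 := rfl
            rw [hfst, shuffle_assoc (mixedComp b.1 c) c.1 X w]
            rw [shuffle_left_comm c.1 (mixedComp b.1 c) X w]

lemma mixedComp_comp' (f : FPS) (b c : FPS × FPS) :
    mixedComp (mixedComp f b) c = mixedComp f (compD b c) :=
  funext (fun w => mixedComp_comp b c w.length w (le_refl _) f)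

lemma mixedComp_shuffle' (f g : FPS) (d : FPS × FPS) :
    mixedComp (shuffle f g) d = shuffle (mixedComp f d) (mixedComp g d) :=
  funext (fun w => mixedComp_shuffle d w.length w (le_refl _) f g)

lemma mixedComp_add' (f g : FPS) (d : FPS × FPS) :
    mixedComp (fun u => f u + g u) d = fun w => mixedComp f d w + mixedComp g d w :=
  funext (fun w => mixedComp_add f g d w)

lemma compD_assoc (a b c : FPS × FPS) : compD (compD a b) c = compD a (compD b c) := by
  unfold compD
  have h1 : mixedComp (shuffle (mixedComp a.1 b) b.1) c
      = shuffle (mixedComp (mixedComp a.1 b) c) (mixedComp b.1 c) :=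
    mixedComp_shuffle' _ _ c
  refine Prod.ext ?_ ?_
  · show shuffle (mixedComp (shuffle (mixedComp a.1 b) b.1) c) c.1
      = shuffle (mixedComp a.1 (compD b c)) (shuffle (mixedComp b.1 c) c.1)
    rw [h1, ← mixedComp_comp' a.1 b c]
    funext w
    exact shuffle_assoc _ _ _ w
  · show shuffle (mixedComp (shuffle (mixedComp a.1 b) b.1) c) c.2
        + mixedComp (shuffle (mixedComp a.1 b) b.2 + mixedComp a.2 b) c
      = shuffle (mixedComp a.1 (compD b c)) (shuffle (mixedComp b.1 c) c.2 + mixedComp b.2 c)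
        + mixedComp a.2 (compD b c)
    rw [h1, ← mixedComp_comp' a.1 b c, ← mixedComp_comp' a.2 b c]
    have hadd : (shuffle (mixedComp a.1 b) b.2 + mixedComp a.2 b)
        = fun u => shuffle (mixedComp a.1 b) b.2 u + mixedComp a.2 b u := rfl
    rw [hadd, mixedComp_add', mixedComp_shuffle']
    funext w
    simp only [Pi.add_apply]
    have hadd2 : (shuffle (mixedComp b.1 c) c.2 + mixedComp b.2 c)
        = fun u => shuffle (mixedComp b.1 c) c.2 u + mixedComp b.2 c u := rfl
    rw [hadd2, shuffle_add_right]
    rw [shuffle_assoc (mixedComp (mixedComp a.1 b) c) (mixedComp b.1 c) c.2 w]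
    ring

end Work

namespace Work

def agree (n : ℕ) (e e' : FPS × FPS) : Prop :=
  ∀ w : List Bool, w.length < n → e.1 w = e'.1 w ∧ e.2 w = e'.2 w

lemma agree_mono {m n : ℕ} (h : m ≤ n) {e e' : FPS × FPS} (ha : agree n e e') :
    agree m e e' := fun w hw => ha w (lt_of_lt_of_le hw h)

lemma agree_refl (n : ℕ) (e : FPS × FPS) : agree n e e := fun _ _ => ⟨rfl, rfl⟩

lemma agree_trans {n : ℕ} {e e' e'' : FPS × FPS} (h1 : agree n e e') (h2 : agree n e' e'') :
    agree n e e'' := fun w hw =>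
  ⟨(h1 w hw).1.trans (h2 w hw).1, (h1 w hw).2.trans (h2 w hw).2⟩

lemma mixedComp_agree {n : ℕ} {e e' : FPS × FPS} (h : agree n e e') (f : FPS)
    {u : List Bool} (hu : u.length ≤ n) : mixedComp f e u = mixedComp f e' u :=
  mixedComp_congr_d f u (fun v hv => h v (by omega))

lemma SR_fst_agree {n : ℕ} {e e' : FPS × FPS} (c : FPS × FPS) (h : agree n e e') :
    ∀ w : List Bool, w.length ≤ n → (SR c e).1 w = (SR c e').1 w := by
  intro w hw
  show shuffleInv (mixedComp c.1 e) w = shuffleInv (mixedComp c.1 e') w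
  exact shuffleInv_congr w (fun u hu => mixedComp_agree h c.1 (by omega))

lemma SR_agree {n : ℕ} {e e' : FPS × FPS} (c : FPS × FPS) (h : agree n e e') :
    agree n (SR c e) (SR c e') := by
  intro w hw
  constructor
  · exact SR_fst_agree c h w (by omega)
  · show -(shuffle e.1 (mixedComp c.2 e)) w = -(shuffle e'.1 (mixedComp c.2 e')) w
    simp only [Pi.neg_apply, neg_inj]
    refine shuffle_congr w (fun u hu => (h u (by omega)).1) ?_
    intro u hu
    exact mixedComp_agree h c.2 (by omega)

lemma SR2_contract {n : ℕ} {e e' : FPS × FPS} (c : FPS × FPS) (h : agree n e e') :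
    agree (n+1) (SR c (SR c e)) (SR c (SR c e')) := by
  have h1 := SR_fst_agree c h
  have h2 := SR_agree c h
  intro w hw
  have hwn : w.length ≤ n := by omega
  constructor
  · exact SR_fst_agree c h2 w hwn
  · show -(shuffle (SR c e).1 (mixedComp c.2 (SR c e))) w
        = -(shuffle (SR c e').1 (mixedComp c.2 (SR c e'))) w
    simp only [Pi.neg_apply, neg_inj]
    refine shuffle_congr w (fun u hu => h1 u (by omega)) ?_
    intro u hu
    exact mixedComp_agree h2 c.2 (by omega)

noncomputable def iter (c : FPS × FPS) : ℕ → FPS × FPS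
  | 0 => (oneF, (0:FPS))
  | n+1 => SR c (SR c (iter c n))

lemma iter_agree_succ (c : FPS × FPS) : ∀ n : ℕ, agree n (iter c n) (iter c (n+1)) := by
  intro n
  induction n with
  | zero => intro w hw; omega
  | succ n ih => exact SR2_contract c ih

lemma iter_agree_ge (c : FPS × FPS) : ∀ (n k : ℕ), agree n (iter c n) (iter c (n+k)) := by
  intro n k
  induction k with
  | zero => exact agree_refl n _
  | succ k ih =>
      refine agree_trans ih ?_
      have := iter_agree_succ c (n+k)
      exact agree_mono (by omega) this

lemma iter_agree (c : FPS × FPS) {n m : ℕ} (h : n ≤ m) : agree n (iter c n) (iter c m) := by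
  obtain ⟨k, rfl⟩ := Nat.exists_eq_add_of_le h
  exact iter_agree_ge c n k

noncomputable def fixPt (c : FPS × FPS) : FPS × FPS :=
  (fun w => (iter c (w.length+1)).1 w, fun w => (iter c (w.length+1)).2 w)

lemma fixPt_agree (c : FPS × FPS) (n : ℕ) : agree n (fixPt c) (iter c n) := by
  intro w hw
  have h := iter_agree c (n := w.length+1) (m := n) (by omega)
  exact ⟨(h w (by omega)).1.symm ▸ rfl, (h w (by omega)).2.symm ▸ rfl⟩

lemma fixPt_SR2 (c : FPS × FPS) : SR c (SR c (fixPt c)) = fixPt c := by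
  refine Prod.ext (funext fun w => ?_) (funext fun w => ?_) <;>
  · set n := w.length + 1 with hn
    have h1 : agree (n+1) (SR c (SR c (fixPt c))) (iter c (n+1)) :=
      SR2_contract c (fixPt_agree c n)
    have h2 : agree (n+1) (fixPt c) (iter c (n+1)) := fixPt_agree c (n+1)
    have hw : w.length < n + 1 := by omega
    first
    | exact ((h1 w hw).1).trans ((h2 w hw).1).symm
    | exact ((h1 w hw).2).trans ((h2 w hw).2).symm

lemma SR2_fixed_unique {c p q : FPS × FPS} (hp : SR c (SR c p) = p) (hq : SR c (SR c q) = q) :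
    p = q := by
  have key : ∀ n, agree n p q := by
    intro n
    induction n with
    | zero => intro w hw; omega
    | succ n ih =>
        have := SR2_contract c ih
        rwa [hp, hq] at this
  refine Prod.ext (funext fun w => ?_) (funext fun w => ?_)
  · exact (key (w.length+1) w (by omega)).1
  · exact (key (w.length+1) w (by omega)).2

lemma fixPt_SR (c : FPS × FPS) : SR c (fixPt c) = fixPt c := by
  have h : SR c (SR c (SR c (fixPt c))) = SR c (fixPt c) := by
    rw [fixPt_SR2]
  exact SR2_fixed_unique h (fixPt_SR2 c)

lemma SR_fixed_unique {c e : FPS × FPS} (he : SR c e = e) : e = fixPt c := by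
  have h2 : SR c (SR c e) = e := by rw [he, he]
  exact SR2_fixed_unique h2 (fixPt_SR2 c)

end Work

namespace Work

lemma fixed_left_inv {c e : FPS × FPS} (hc : c.1 [] ≠ 0) (he : SR c e = e) :
    compD e c = (oneF, (0:FPS)) := by
  have hri : compD c e = (oneF, (0:FPS)) := fixed_right_inv hc he
  have he1 : e.1 [] ≠ 0 := fixed_ne_zero hc he
  have he'fix : SR e (fixPt e) = fixPt e := fixPt_SR e
  have hee' : compD e (fixPt e) = (oneF, (0:FPS)) := fixed_right_inv he1 he'fix
  have hc_eq : fixPt e = c := by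
    calc fixPt e = compD (oneF, (0:FPS)) (fixPt e) := (compD_id_left _).symm
    _ = compD (compD c e) (fixPt e) := by rw [hri]
    _ = compD c (compD e (fixPt e)) := compD_assoc ..
    _ = compD c (oneF, (0:FPS)) := by rw [hee']
    _ = c := compD_id_right c
  rw [← hc_eq, hee']

end Work

/-- The pairs `(c_L, c_R)` with `c_L` non-proper form a group under the composition
product with identity `(1,0)`; the inverse of `c` is the unique fixed point of the
contraction `S_R`. -/
theorem compD_group_inverse :
    (∀ c d : FPS × FPS, c.1 [] ≠ 0 → d.1 [] ≠ 0 → (compD c d).1 [] ≠ 0) ∧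
    (∀ c : FPS × FPS, c.1 [] ≠ 0 →
      (∃! e : FPS × FPS, SR c e = e) ∧
      (∀ e : FPS × FPS, SR c e = e →
        e.1 [] ≠ 0 ∧ compD c e = (oneF, (0 : FPS)) ∧ compD e c = (oneF, (0 : FPS)))) := by
  constructor
  · intro c d hc hd
    show shuffle (mixedComp c.1 d) d.1 [] ≠ 0
    rw [Work.shuffle_nil, Work.mixedComp_nil]
    exact mul_ne_zero hc hd
  · intro c hc
    refine ⟨⟨Work.fixPt c, Work.fixPt_SR c, fun e he => Work.SR_fixed_unique he⟩, ?_⟩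
    intro e he
    exact ⟨Work.fixed_ne_zero hc he, Work.fixed_right_inv hc he, Work.fixed_left_inv hc he⟩
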